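/- arXiv:1206.4389 — 2 statements merged into one kernel-verified Lean document; each statement's English description precedes it below -/
import Mathlib

section
/- Let μ₁, μ₂ > 0 and for E > 0 let z₁ ~ N(μ₁√E, 1) and z₂ ~ N(μ₂√E, 1) be independent Gaussian random variables. Define Λ₁(E) = P(z₁ + z₂ > 0, z₁ > 0, z₂ < 0) and Λ₂(E) = P(z₁ + z₂ < 0, z₁ > 0, z₂ < 0). Then Λ₁(E)/Λ₂(E) → ∞ as E → ∞. -/
open Filter MeasureTheory ProbabilityTheory Real Set

lemma gauss_Ioo_lower (m u v M : ℝ) (huv : u ≤ v)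
    (hM : ∀ x ∈ Set.Ioo u v, (x - m)^2 ≤ M^2) :
    ENNReal.ofReal ((v - u) * ((Real.sqrt (2*Real.pi))⁻¹ * Real.exp (-M^2/2)))
      ≤ gaussianReal m 1 (Set.Ioo u v) := by
  rw [gaussianReal_apply_eq_integral m one_ne_zero]
  apply ENNReal.ofReal_le_ofReal
  have hconst : ∫ x in Set.Ioo u v, ((Real.sqrt (2*Real.pi))⁻¹ * Real.exp (-M^2/2))
      = (v - u) * ((Real.sqrt (2*Real.pi))⁻¹ * Real.exp (-M^2/2)) := by
    rw [setIntegral_const]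
    simp [Real.volume_Ioo, ENNReal.toReal_ofReal (sub_nonneg.mpr huv), huv]
  rw [← hconst]
  apply setIntegral_mono_on
  · exact integrableOn_const (by simp [Real.volume_Ioo])
  · exact (integrable_gaussianPDFReal m 1).integrableOn
  · exact measurableSet_Ioo
  · intro x hx
    simp only [gaussianPDFReal, NNReal.coe_one, mul_one]
    apply mul_le_mul_of_nonneg_left _ (by positivity)
    apply Real.exp_le_exp.mpr
    have := hM x hx
    linarith
lemma gauss_tail (b c : ℝ) (h : c ≤ b) :
    gaussianReal b 1 (Set.Iio c) ≤ ENNReal.ofReal (Real.exp (-(b-c)^2/2)) := by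
  rw [gaussianReal_apply_eq_integral b one_ne_zero]
  apply ENNReal.ofReal_le_ofReal
  have key : ∫ x in Set.Iio c, gaussianPDFReal b 1 x
      ≤ ∫ x in Set.Iio c, Real.exp (-(b-c)^2/2) * gaussianPDFReal c 1 x := by
    apply setIntegral_mono_on
    · exact (integrable_gaussianPDFReal b 1).integrableOn
    · exact ((integrable_gaussianPDFReal c 1).const_mul _).integrableOn
    · exact measurableSet_Iio
    · intro x hx
      simp only [gaussianPDFReal, NNReal.coe_one, mul_one]
      rw [mul_comm (Real.exp _), mul_assoc, ← Real.exp_add]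
      apply mul_le_mul_of_nonneg_left _ (by positivity)
      apply Real.exp_le_exp.mpr
      have hx' : x < c := hx
      nlinarith [mul_nonneg (sub_nonneg.mpr h) (sub_nonneg.mpr hx'.le : (0:ℝ) ≤ c - x)]
  refine key.trans ?_
  rw [MeasureTheory.integral_const_mul]
  calc Real.exp (-(b-c)^2/2) * ∫ x in Set.Iio c, gaussianPDFReal c 1 x
      ≤ Real.exp (-(b-c)^2/2) * ∫ x, gaussianPDFReal c 1 x := by
        apply mul_le_mul_of_nonneg_left _ (Real.exp_nonneg _)
        apply setIntegral_le_integral (integrable_gaussianPDFReal c 1)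
        exact ae_of_all _ (fun x => gaussianPDFReal_nonneg c 1 x)
    _ = Real.exp (-(b-c)^2/2) := by
        rw [integral_gaussianPDFReal_eq_one c one_ne_zero, mul_one]
lemma lam2_upper (a b : ℝ) (ha : 0 ≤ a) (hb : 0 ≤ b) :
    ((gaussianReal a 1).prod (gaussianReal b 1))
        {z : ℝ × ℝ | z.1 + z.2 < 0 ∧ z.1 > 0 ∧ z.2 < 0}
      ≤ ENNReal.ofReal (2 * Real.exp (-(a^2/10 + b^2/2))) := by
  have hS : MeasurableSet {z : ℝ × ℝ | z.1 + z.2 < 0 ∧ z.1 > 0 ∧ z.2 < 0} :=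
    ((isOpen_lt (continuous_fst.add continuous_snd) continuous_const).inter
      ((isOpen_lt continuous_const continuous_fst).inter
        (isOpen_lt continuous_snd continuous_const))).measurableSet
  rw [Measure.prod_apply hS]
  have step1 : ∀ x : ℝ, gaussianReal b 1 (Prod.mk x ⁻¹'
        {z : ℝ × ℝ | z.1 + z.2 < 0 ∧ z.1 > 0 ∧ z.2 < 0})
      ≤ (Set.Ioi (0:ℝ)).indicator (fun x => ENNReal.ofReal (Real.exp (-(x+b)^2/2))) x := by
    intro x
    by_cases hx : (0:ℝ) < x
    · rw [Set.indicator_of_mem (Set.mem_Ioi.mpr hx)]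
      refine le_trans (measure_mono ?_) (le_trans (gauss_tail b (-x) (by linarith)) ?_)
      · intro y hy
        simp only [Set.mem_preimage, Set.mem_setOf_eq] at hy
        simp only [Set.mem_Iio]
        linarith [hy.1]
      · apply le_of_eq
        congr 1
        ring_nf
    · rw [Set.indicator_of_notMem (by simpa using hx)]
      have : (Prod.mk x ⁻¹' {z : ℝ × ℝ | z.1 + z.2 < 0 ∧ z.1 > 0 ∧ z.2 < 0}) = ∅ := by
        ext y
        simp only [Set.mem_preimage, Set.mem_setOf_eq, Set.mem_empty_iff_false, iff_false]
        intro hy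
        exact hx hy.2.1
      simp [this]
  calc ∫⁻ x, gaussianReal b 1 (Prod.mk x ⁻¹'
          {z : ℝ × ℝ | z.1 + z.2 < 0 ∧ z.1 > 0 ∧ z.2 < 0}) ∂(gaussianReal a 1)
      ≤ ∫⁻ x, (Set.Ioi (0:ℝ)).indicator
          (fun x => ENNReal.ofReal (Real.exp (-(x+b)^2/2))) x ∂(gaussianReal a 1) :=
        lintegral_mono step1
    _ = ∫⁻ x in Set.Ioi (0:ℝ),
          ENNReal.ofReal (Real.exp (-(x+b)^2/2)) ∂(gaussianReal a 1) := by
        rw [lintegral_indicator measurableSet_Ioi]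
    _ = ∫⁻ x in Set.Ioi (0:ℝ),
          ENNReal.ofReal (Real.exp (-(x+b)^2/2)) * gaussianPDF a 1 x ∂volume := by
        rw [gaussianReal_of_var_ne_zero a one_ne_zero, restrict_withDensity measurableSet_Ioi,
          lintegral_withDensity_eq_lintegral_mul _ (measurable_gaussianPDF a 1)]
        · congr 1; ext x; rw [Pi.mul_apply, mul_comm]
        · apply Measurable.ennreal_ofReal
          fun_prop
    _ ≤ ∫⁻ x in Set.Ioi (0:ℝ),
          ENNReal.ofReal (2 * Real.exp (-(a^2/10 + b^2/2)) * gaussianPDFReal a 4 x) ∂volume := by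
        apply setLIntegral_mono
        · apply Measurable.ennreal_ofReal
          exact (measurable_const.mul (measurable_gaussianPDFReal a 4))
        intro x hx
        have hx0 : (0:ℝ) < x := hx
        rw [gaussianPDF, ← ENNReal.ofReal_mul (Real.exp_nonneg _)]
        apply ENNReal.ofReal_le_ofReal
        simp only [gaussianPDFReal, NNReal.coe_one, NNReal.coe_ofNat, mul_one]
        have hsqrt4 : Real.sqrt (2*Real.pi*4) = 2 * Real.sqrt (2*Real.pi) := by
          rw [show (2*Real.pi*4 : ℝ) = 2^2 * (2*Real.pi) by ring, Real.sqrt_mul (by positivity),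
            Real.sqrt_sq (by norm_num)]
        rw [hsqrt4]
        rw [show (2:ℝ) * Real.exp (-(a^2/10 + b^2/2)) * ((2 * Real.sqrt (2*Real.pi))⁻¹
              * Real.exp (-(x-a)^2/(2*4)))
            = (Real.sqrt (2*Real.pi))⁻¹ * (Real.exp (-(a^2/10 + b^2/2))
              * Real.exp (-(x-a)^2/(2*4))) by field_simp]
        rw [show Real.exp (-(x+b)^2/2) * ((Real.sqrt (2*Real.pi))⁻¹ * Real.exp (-(x-a)^2/2))
            = (Real.sqrt (2*Real.pi))⁻¹ * (Real.exp (-(x+b)^2/2) * Real.exp (-(x-a)^2/2)) by ring]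
        apply mul_le_mul_of_nonneg_left _ (by positivity)
        rw [← Real.exp_add, ← Real.exp_add]
        apply Real.exp_le_exp.mpr
        nlinarith [sq_nonneg (7*x - 3*a), mul_nonneg hb hx0.le]
    _ ≤ ∫⁻ x, ENNReal.ofReal (2 * Real.exp (-(a^2/10 + b^2/2)) * gaussianPDFReal a 4 x) ∂volume :=
        setLIntegral_le_lintegral _ _
    _ = ENNReal.ofReal (2 * Real.exp (-(a^2/10 + b^2/2))) := by
        have : ∀ x : ℝ, ENNReal.ofReal (2 * Real.exp (-(a^2/10 + b^2/2)) * gaussianPDFReal a 4 x)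
            = ENNReal.ofReal (2 * Real.exp (-(a^2/10 + b^2/2))) * gaussianPDF a 4 x := by
          intro x
          rw [gaussianPDF, ← ENNReal.ofReal_mul (by positivity)]
        simp_rw [this]
        rw [lintegral_const_mul _ (measurable_gaussianPDF a 4),
          lintegral_gaussianPDF_eq_one a (by norm_num), mul_one]
lemma lam1_lower (a b : ℝ) (ha : 1 ≤ a) (hb : 0 ≤ b) :
    ENNReal.ofReal (((Real.sqrt (2*Real.pi))⁻¹ * Real.exp (-1^2/2)) *
        ((Real.sqrt (2*Real.pi))⁻¹ * Real.exp (-(1+b)^2/2)))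
      ≤ ((gaussianReal a 1).prod (gaussianReal b 1))
          {z : ℝ × ℝ | z.1 + z.2 > 0 ∧ z.1 > 0 ∧ z.2 < 0} := by
  have hsub : (Set.Ioo a (a+1)) ×ˢ (Set.Ioo (-1:ℝ) 0) ⊆
      {z : ℝ × ℝ | z.1 + z.2 > 0 ∧ z.1 > 0 ∧ z.2 < 0} := by
    rintro ⟨x, y⟩ ⟨⟨hx1, _⟩, ⟨hy1, hy2⟩⟩
    exact ⟨by simp; linarith, by simp; linarith, by simpa using hy2⟩
  refine le_trans ?_ (measure_mono hsub)
  rw [Measure.prod_prod]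
  have h1 := gauss_Ioo_lower a a (a+1) 1 (by linarith)
    (fun x hx => by obtain ⟨h1, h2⟩ := hx; nlinarith)
  have h2 := gauss_Ioo_lower b (-1) 0 (1+b) (by linarith)
    (fun x hx => by obtain ⟨h1, h2⟩ := hx; nlinarith)
  simp only [show a + 1 - a = (1:ℝ) by ring, show (0:ℝ) - (-1) = 1 by ring, one_mul] at h1 h2
  rw [ENNReal.ofReal_mul (by positivity)]
  exact mul_le_mul' h1 h2

lemma lam2_pos (a b : ℝ) (ha : 0 ≤ a) (hb : 0 ≤ b) :
    0 < ((gaussianReal a 1).prod (gaussianReal b 1))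
        {z : ℝ × ℝ | z.1 + z.2 < 0 ∧ z.1 > 0 ∧ z.2 < 0} := by
  have hsub : (Set.Ioo (0:ℝ) 1) ×ˢ (Set.Ioo (-3:ℝ) (-2)) ⊆
      {z : ℝ × ℝ | z.1 + z.2 < 0 ∧ z.1 > 0 ∧ z.2 < 0} := by
    rintro ⟨x, y⟩ ⟨⟨hx1, hx2⟩, ⟨hy1, hy2⟩⟩
    exact ⟨by simp; linarith, by simpa using hx1, by simp; linarith⟩
  refine lt_of_lt_of_le ?_ (measure_mono hsub)
  rw [Measure.prod_prod]
  have h1 := gauss_Ioo_lower a 0 1 (a+1) (by norm_num)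
    (fun x hx => by obtain ⟨h1, h2⟩ := hx; nlinarith)
  have h2 := gauss_Ioo_lower b (-3) (-2) (b+3) (by norm_num)
    (fun x hx => by obtain ⟨h1, h2⟩ := hx; nlinarith)
  have p1 : (0 : ENNReal) < gaussianReal a 1 (Set.Ioo 0 1) :=
    lt_of_lt_of_le (ENNReal.ofReal_pos.mpr (by positivity)) h1
  have p2 : (0 : ENNReal) < gaussianReal b 1 (Set.Ioo (-3) (-2)) :=
    lt_of_lt_of_le (ENNReal.ofReal_pos.mpr (by positivity)) h2
  exact ENNReal.mul_pos p1.ne' p2.ne'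

lemma ratio_eq (s c1 g1 g2 : ℝ) :
    (s * Real.exp g1) * (s * Real.exp g2) / (2 * Real.exp (-c1))
      = (s * s / 2) * Real.exp (g1 + g2 + c1) := by
  rw [Real.exp_add, Real.exp_add, Real.exp_neg]
  have := Real.exp_ne_zero c1
  field_simp

theorem stmt_5 (μ₁ μ₂ : ℝ) (h₁ : 0 < μ₁) (h₂ : 0 < μ₂) :
    Tendsto (fun E : ℝ =>
        (((gaussianReal (μ₁ * Real.sqrt E) 1).prod (gaussianReal (μ₂ * Real.sqrt E) 1))
            {z : ℝ × ℝ | z.1 + z.2 > 0 ∧ z.1 > 0 ∧ z.2 < 0}).toReal /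
        (((gaussianReal (μ₁ * Real.sqrt E) 1).prod (gaussianReal (μ₂ * Real.sqrt E) 1))
            {z : ℝ × ℝ | z.1 + z.2 < 0 ∧ z.1 > 0 ∧ z.2 < 0}).toReal)
      atTop atTop := by
  set s : ℝ := (Real.sqrt (2*Real.pi))⁻¹ with hs
  have hspos : 0 < s := by rw [hs]; positivity
  set G : ℝ → ℝ := fun E => (s * s / 2) * Real.exp (μ₁^2*E/10 - μ₂*Real.sqrt E - 1) with hG
  have hGtop : Tendsto G atTop atTop := by
    apply Tendsto.const_mul_atTop (by positivity)
    apply Real.tendsto_exp_atTop.comp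
    apply tendsto_atTop_mono' atTop (f₁ := fun E : ℝ => μ₁^2/20 * E - 1)
    · filter_upwards [eventually_ge_atTop (max 0 ((20*μ₂/μ₁^2)^2))] with E hE
      have hE0 : (0:ℝ) ≤ E := le_trans (le_max_left _ _) hE
      have h1 : 20*μ₂/μ₁^2 ≤ Real.sqrt E := by
        have := Real.sqrt_le_sqrt (le_trans (le_max_right _ _) hE)
        rwa [Real.sqrt_sq (by positivity)] at this
      have h3 : 20*μ₂ ≤ Real.sqrt E * μ₁^2 := (div_le_iff₀ (by positivity)).mp h1
      have h2 : Real.sqrt E * Real.sqrt E = E := Real.mul_self_sqrt hE0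
      nlinarith [mul_le_mul_of_nonneg_right h3 (Real.sqrt_nonneg E)]
    · apply tendsto_atTop_add_const_right
      exact Tendsto.const_mul_atTop (by positivity) tendsto_id
  apply tendsto_atTop_mono' atTop _ hGtop
  filter_upwards [eventually_ge_atTop (max 0 ((1/μ₁)^2))] with E hE
  have hE0 : (0:ℝ) ≤ E := le_trans (le_max_left _ _) hE
  have ha0 : 0 ≤ μ₁ * Real.sqrt E := by positivity
  have hb0 : 0 ≤ μ₂ * Real.sqrt E := by positivity
  have ha1 : 1 ≤ μ₁ * Real.sqrt E := by
    have h1 : 1/μ₁ ≤ Real.sqrt E := by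
      have := Real.sqrt_le_sqrt (le_trans (le_max_right _ _) hE)
      rwa [Real.sqrt_sq (by positivity)] at this
    calc (1:ℝ) = μ₁ * (1/μ₁) := by field_simp
      _ ≤ μ₁ * Real.sqrt E := mul_le_mul_of_nonneg_left h1 h₁.le
  have hA := lam1_lower (μ₁ * Real.sqrt E) (μ₂ * Real.sqrt E) ha1 hb0
  have hBu := lam2_upper (μ₁ * Real.sqrt E) (μ₂ * Real.sqrt E) ha0 hb0
  have hBp := lam2_pos (μ₁ * Real.sqrt E) (μ₂ * Real.sqrt E) ha0 hb0
  have hA' : (s * Real.exp (-1^2/2)) * (s * Real.exp (-(1+μ₂*Real.sqrt E)^2/2))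
      ≤ (((gaussianReal (μ₁ * Real.sqrt E) 1).prod (gaussianReal (μ₂ * Real.sqrt E) 1))
          {z : ℝ × ℝ | z.1 + z.2 > 0 ∧ z.1 > 0 ∧ z.2 < 0}).toReal := by
    rw [show (s * Real.exp (-1^2/2)) * (s * Real.exp (-(1+μ₂*Real.sqrt E)^2/2))
        = (ENNReal.ofReal ((s * Real.exp (-1^2/2)) * (s * Real.exp (-(1+μ₂*Real.sqrt E)^2/2)))).toReal
      from (ENNReal.toReal_ofReal (by positivity)).symm]
    exact ENNReal.toReal_mono (measure_ne_top _ _) hA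
  have hBu' : (((gaussianReal (μ₁ * Real.sqrt E) 1).prod (gaussianReal (μ₂ * Real.sqrt E) 1))
          {z : ℝ × ℝ | z.1 + z.2 < 0 ∧ z.1 > 0 ∧ z.2 < 0}).toReal
      ≤ 2 * Real.exp (-((μ₁ * Real.sqrt E)^2/10 + (μ₂ * Real.sqrt E)^2/2)) :=
    ENNReal.toReal_le_of_le_ofReal (by positivity) hBu
  have hBp' : 0 < (((gaussianReal (μ₁ * Real.sqrt E) 1).prod (gaussianReal (μ₂ * Real.sqrt E) 1))
          {z : ℝ × ℝ | z.1 + z.2 < 0 ∧ z.1 > 0 ∧ z.2 < 0}).toReal :=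
    ENNReal.toReal_pos hBp.ne' (measure_ne_top _ _)
  calc G E = (s * Real.exp (-1^2/2)) * (s * Real.exp (-(1+μ₂*Real.sqrt E)^2/2))
        / (2 * Real.exp (-((μ₁ * Real.sqrt E)^2/10 + (μ₂ * Real.sqrt E)^2/2))) := by
        have h2 : Real.sqrt E ^ 2 = E := Real.sq_sqrt hE0
        have hexp : μ₁^2*E/10 - μ₂*Real.sqrt E - 1
            = -1^2/2 + -(1+μ₂*Real.sqrt E)^2/2
              + ((μ₁*Real.sqrt E)^2/10 + (μ₂*Real.sqrt E)^2/2) := by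
          linear_combination (-μ₁^2/10) * h2
        simp only [hG]
        rw [ratio_eq, hexp]
    _ ≤ _ := div_le_div₀ ENNReal.toReal_nonneg hA' hBp' hBu'
end

section
/- With β'_k(p) as defined (the probability that a Bernoulli(p)^n error vector is within Hamming distance t of a fixed weight-k vector), as p → 0⁺ and for k ≥ 2t+1, β'_k(p) / p^{k−t} → C(k, t); in particular for k = 2t+1, β'_{2t+1}(p) ~ C(2t+1, t)·p^{t+1}. -/
open Filter Topology

/-- with `β'_k(p)` the double-sum formula (the probability that a
Bernoulli(p)ⁿ error vector is within Hamming distance `t` of a fixed weight-`k`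
vector), as `p → 0⁺`, `β'_k(p) / p^{k−t} → C(k, t)`. -/
theorem stmt_14 (n t k : ℕ) (hk : k ≤ n) (hkt : 2 * t + 1 ≤ k) :
    Tendsto (fun p : ℝ =>
        (∑ m ∈ Finset.range (t + 1), ∑ j ∈ Finset.range (min m (n - k) + 1),
          (k.choose (m - j) : ℝ) * ((n - k).choose j : ℝ) *
            p ^ (k - m + 2 * j) * (1 - p) ^ (n - k + m - 2 * j)) / p ^ (k - t))
      (𝓝[>] 0) (𝓝 (k.choose t : ℝ)) := by
  set g : ℝ → ℝ := fun p =>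
      ∑ m ∈ Finset.range (t + 1), ∑ j ∈ Finset.range (min m (n - k) + 1),
        (k.choose (m - j) : ℝ) * ((n - k).choose j : ℝ) *
          p ^ (t - m + 2 * j) * (1 - p) ^ (n - k + m - 2 * j) with hg
  have key : ∀ p ∈ Set.Ioi (0:ℝ),
      (∑ m ∈ Finset.range (t + 1), ∑ j ∈ Finset.range (min m (n - k) + 1),
          (k.choose (m - j) : ℝ) * ((n - k).choose j : ℝ) *
            p ^ (k - m + 2 * j) * (1 - p) ^ (n - k + m - 2 * j)) / p ^ (k - t) = g p := by
    intro p hp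
    have hp0 : (p : ℝ) ≠ 0 := ne_of_gt hp
    rw [hg, Finset.sum_div]
    refine Finset.sum_congr rfl fun m hm => ?_
    rw [Finset.sum_div]
    refine Finset.sum_congr rfl fun j hj => ?_
    have hm' : m ≤ t := Finset.mem_range_succ_iff.mp hm
    have hexp : k - m + 2 * j = (k - t) + (t - m + 2 * j) := by omega
    rw [hexp, pow_add]
    field_simp
  have hcont : Continuous g := by
    apply continuous_finset_sum
    intro m _
    apply continuous_finset_sum
    intro j _
    exact ((continuous_const.mul (continuous_pow _)).mul
      ((continuous_const.sub continuous_id).pow _))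
  have hval : g 0 = (k.choose t : ℝ) := by
    rw [hg]
    simp only
    rw [Finset.sum_eq_single t]
    · rw [Finset.sum_eq_single 0]
      · simp
      · intro j hj hj0
        have h1 : t - t + 2 * j ≠ 0 := by omega
        simp [zero_pow h1, hj0]
      · intro h
        exact absurd (Finset.mem_range.mpr (by omega)) h
    · intro m hm hmt
      apply Finset.sum_eq_zero
      intro j hj
      have hm' : m ≤ t := Finset.mem_range_succ_iff.mp hm
      have h1 : t - m + 2 * j ≠ 0 := by omega
      simp [zero_pow h1]
    · intro h
      exact absurd (Finset.self_mem_range_succ t) h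
  have htg : Tendsto g (𝓝[>] (0:ℝ)) (𝓝 (k.choose t : ℝ)) := by
    have := hcont.tendsto 0
    rw [hval] at this
    exact this.mono_left nhdsWithin_le_nhds
  exact htg.congr' (eventuallyEq_of_mem self_mem_nhdsWithin fun p hp => (key p hp).symm)
end
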